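/- Let h > 0 and k, w ∈ C²([0,h]) with k > 0 on [0,h], and set μ(z) = exp( ∫₀ᶻ w(ζ)/k(ζ) dζ ). There exists a constant C > 0, depending only on k, w and h, such that for every λ ≥ 0 and every p ∈ C²([0,h]) satisfying (k p')' + w p' + λ p = 0 on [0,h], p'(0) = p'(h) = 0, and the normalization p(0) = 1, one has C⁻¹ ≤ ∫₀ʰ p(z)² μ(z) dz ≤ C. -/

import Mathlib

open Set intervalIntegral
set_option maxHeartbeats 2000000

namespace SLB

lemma gronwall_fwd {f f' : ℝ → ℝ} {K a b : ℝ}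
    (hf : ContinuousOn f (Icc a b))
    (hd : ∀ x ∈ Icc a b, HasDerivWithinAt f (f' x) (Icc a b) x)
    (hbound : ∀ x ∈ Icc a b, |f' x| ≤ K * |f x|) :
    ∀ x ∈ Icc a b, |f x| ≤ |f a| * Real.exp (K * (x - a)) := by
  intro x hx
  have H := norm_le_gronwallBound_of_norm_deriv_right_le (f := f) (f' := f')
    (δ := |f a|) (K := K) (ε := 0) (a := a) (b := b) hf ?_ le_rfl ?_ x hx
  · simpa [gronwallBound_ε0, Real.norm_eq_abs] using H
  · intro y hy
    have h1 : HasDerivWithinAt f (f' y) (Icc y b) y :=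
      (hd y (Ico_subset_Icc_self hy)).mono (Icc_subset_Icc hy.1 le_rfl)
    exact h1.mono_of_mem_nhdsWithin (Icc_mem_nhdsGE_of_mem ⟨le_rfl, hy.2⟩)
  · intro y hy
    simpa [Real.norm_eq_abs] using hbound y (Ico_subset_Icc_self hy)

lemma gronwall_bwd {f f' : ℝ → ℝ} {K a b : ℝ}
    (hf : ContinuousOn f (Icc a b))
    (hd : ∀ x ∈ Icc a b, HasDerivWithinAt f (f' x) (Icc a b) x)
    (hbound : ∀ x ∈ Icc a b, |f' x| ≤ K * |f x|) :
    ∀ x ∈ Icc a b, |f a| ≤ |f x| * Real.exp (K * (x - a)) := by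
  intro x hx
  have hmaps : MapsTo (fun s => x - s) (Icc 0 (x - a)) (Icc a b) := by
    intro s hs
    simp only [mem_Icc] at hs ⊢
    constructor
    · linarith [hx.2]
    · linarith [hx.2]
  have hcomp : ContinuousOn (fun s : ℝ => x - s) (Icc 0 (x - a)) :=
    (continuous_const.sub continuous_id).continuousOn
  have hg_cont : ContinuousOn (fun s => f (x - s)) (Icc 0 (x - a)) :=
    hf.comp hcomp hmaps
  have hg_d : ∀ s ∈ Icc 0 (x - a),
      HasDerivWithinAt (fun s => f (x - s)) (-f' (x - s)) (Icc 0 (x - a)) s := by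
    intro s hs
    have h1 : HasDerivWithinAt (fun s' : ℝ => x - s') (-1) (Icc 0 (x - a)) s := by
      exact (hasDerivWithinAt_id s (Icc 0 (x - a))).const_sub x
    have := (hd (x - s) (hmaps hs)).comp s h1 hmaps
    exact this.congr_deriv (by ring)
  have hg_bd : ∀ s ∈ Icc 0 (x - a), |(-f' (x - s))| ≤ K * |f (x - s)| := by
    intro s hs
    simpa [abs_neg] using hbound (x - s) (hmaps hs)
  have H := gronwall_fwd hg_cont hg_d hg_bd (x - a) ⟨sub_nonneg.mpr hx.1, le_rfl⟩
  simpa [sub_sub_cancel] using H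

lemma ftc_deriv {F : ℝ → ℝ} {a b : ℝ} (hF : ContinuousOn F (Icc a b))
    {x : ℝ} (hx : x ∈ Icc a b) :
    HasDerivWithinAt (fun u => ∫ t in a..u, F t) (F x) (Icc a b) x := by
  haveI : Fact (x ∈ Icc a b) := ⟨hx⟩
  refine intervalIntegral.integral_hasDerivWithinAt_right ?_ ?_ (hF x hx)
  · exact (hF.mono (by rw [uIcc_of_le hx.1]; exact Icc_subset_Icc le_rfl hx.2)).intervalIntegrable
  · exact hF.stronglyMeasurableAtFilter_nhdsWithin measurableSet_Icc x

lemma ftc_integral {F F' : ℝ → ℝ} {a b : ℝ} (hab : a ≤ b)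
    (hF : ContinuousOn F (Icc a b))
    (hd : ∀ x ∈ Icc a b, HasDerivWithinAt F (F' x) (Icc a b) x)
    (hF' : ContinuousOn F' (Icc a b)) :
    ∫ x in a..b, F' x = F b - F a := by
  refine integral_eq_sub_of_hasDeriv_right_of_le hab hF ?_
    ((hF'.mono (by rw [uIcc_of_le hab])).intervalIntegrable)
  intro x hx
  exact ((hd x (Ioo_subset_Icc_self hx)).hasDerivAt
    (Icc_mem_nhds hx.1 hx.2)).hasDerivWithinAt

end SLB

/-- Uniform two-sided bounds on the weighted `L²` norms of the Neumann
Sturm--Liouville eigenfunctions normalized by `p(0) = 1`, with a constant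
depending only on `k`, `w` and `h`. -/
theorem eigenfunction_norm_bounds
    (h : ℝ) (hh : 0 < h) (k w : ℝ → ℝ)
    (hk : ContDiffOn ℝ 2 k (Icc 0 h)) (hw : ContDiffOn ℝ 2 w (Icc 0 h))
    (hkpos : ∀ z ∈ Icc (0:ℝ) h, 0 < k z) :
    ∃ C > (0:ℝ), ∀ (lam : ℝ), 0 ≤ lam → ∀ p : ℝ → ℝ,
      ContDiffOn ℝ 2 p (Icc 0 h) →
      (∀ z ∈ Icc (0:ℝ) h,
        derivWithin (fun y => k y * derivWithin p (Icc 0 h) y) (Icc 0 h) z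
          + w z * derivWithin p (Icc 0 h) z + lam * p z = 0) →
      derivWithin p (Icc 0 h) 0 = 0 → derivWithin p (Icc 0 h) h = 0 →
      p 0 = 1 →
      C⁻¹ ≤ (∫ z in (0:ℝ)..h, (p z) ^ 2 * Real.exp (∫ ζ in (0:ℝ)..z, w ζ / k ζ)) ∧
        (∫ z in (0:ℝ)..h, (p z) ^ 2 * Real.exp (∫ ζ in (0:ℝ)..z, w ζ / k ζ)) ≤ C := by
  have hI : UniqueDiffOn ℝ (Icc (0:ℝ) h) := uniqueDiffOn_Icc hh
  have hne : (Icc (0:ℝ) h).Nonempty := nonempty_Icc.2 hh.le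
  have hkc : ContinuousOn k (Icc 0 h) := hk.continuousOn
  have hwc : ContinuousOn w (Icc 0 h) := hw.continuousOn
  have hkne : ∀ z ∈ Icc (0:ℝ) h, k z ≠ 0 := fun z hz => (hkpos z hz).ne'
  set k' : ℝ → ℝ := derivWithin k (Icc 0 h) with hk'def
  have hk'c : ContinuousOn k' (Icc 0 h) :=
    (hk.derivWithin (m := 1) hI (by norm_num)).continuousOn
  have hkd : ∀ z ∈ Icc (0:ℝ) h, HasDerivWithinAt k (k' z) (Icc 0 h) z :=
    fun z hz => ((hk.differentiableOn (by norm_num)) z hz).hasDerivWithinAt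
  have hwkc : ContinuousOn (fun z => w z / k z) (Icc 0 h) := hwc.div hkc hkne
  set mu : ℝ → ℝ := fun z => Real.exp (∫ ζ in (0:ℝ)..z, w ζ / k ζ) with hmudef
  have hmud : ∀ z ∈ Icc (0:ℝ) h,
      HasDerivWithinAt mu (mu z * (w z / k z)) (Icc 0 h) z := by
    intro z hz
    exact (SLB.ftc_deriv hwkc hz).exp
  have hmuc : ContinuousOn mu (Icc 0 h) :=
    fun z hz => ((hmud z hz).differentiableWithinAt).continuousWithinAt
  have hmupos : ∀ z, 0 < mu z := fun z => Real.exp_pos _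
  -- extrema
  obtain ⟨zm, hzm, hmin⟩ := isCompact_Icc.exists_isMinOn hne hmuc
  obtain ⟨zM, hzM, hmax⟩ := isCompact_Icc.exists_isMaxOn hne hmuc
  obtain ⟨zk, hzk, hκmin⟩ := isCompact_Icc.exists_isMinOn hne hkc
  obtain ⟨zB, hzB, hBmax⟩ := isCompact_Icc.exists_isMaxOn hne
    ((hk'c.add (continuousOn_const.mul hwc)).abs :
      ContinuousOn (fun z => |k' z + 2 * w z|) (Icc 0 h))
  obtain ⟨zW, hzW, hWmax⟩ := isCompact_Icc.exists_isMaxOn hne (hwc.abs :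
      ContinuousOn (fun z => |w z|) (Icc 0 h))
  have hm_le : ∀ z ∈ Icc (0:ℝ) h, mu zm ≤ mu z := fun z hz => isMinOn_iff.mp hmin z hz
  have hM_ge : ∀ z ∈ Icc (0:ℝ) h, mu z ≤ mu zM := fun z hz => isMaxOn_iff.mp hmax z hz
  have hκ_le : ∀ z ∈ Icc (0:ℝ) h, k zk ≤ k z := fun z hz => isMinOn_iff.mp hκmin z hz
  have hB_ge : ∀ z ∈ Icc (0:ℝ) h, |k' z + 2 * w z| ≤ |k' zB + 2 * w zB| :=
    fun z hz => isMaxOn_iff.mp hBmax z hz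
  have hW_ge : ∀ z ∈ Icc (0:ℝ) h, |w z| ≤ |w zW| := fun z hz => isMaxOn_iff.mp hWmax z hz
  set m : ℝ := mu zm with hmdef
  set M : ℝ := mu zM with hMdef
  set κ : ℝ := k zk with hκdef
  set B : ℝ := |k' zB + 2 * w zB| with hBdef
  set W : ℝ := |w zW| with hWdef
  have hm : 0 < m := hmupos zm
  have hM : 0 < M := hmupos zM
  have hκ : 0 < κ := hkpos zk hzk
  have hB : 0 ≤ B := abs_nonneg _
  have hW : 0 ≤ W := abs_nonneg _
  set K : ℝ := B / κ with hKdef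
  have hK : 0 ≤ K := div_nonneg hB hκ.le
  set X : ℝ := Real.exp (K * h) with hXdef
  have hX1 : 1 ≤ X := Real.one_le_exp (by positivity)
  have hX : 0 < X := lt_of_lt_of_le one_pos hX1
  refine ⟨max (M * h * X) (2 * X / (m * h)), lt_of_lt_of_le (by positivity) (le_max_right _ _), ?_⟩
  set C : ℝ := max (M * h * X) (2 * X / (m * h)) with hCdef
  have hCinv : C⁻¹ ≤ m * h / (2 * X) := by
    have h1 : (2 * X / (m * h))⁻¹ = m * h / (2 * X) := by
      rw [inv_div]
    rw [← h1]
    exact inv_anti₀ (by positivity) (le_max_right _ _)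
  intro lam hlam p hp hODE hq0 hqh hp0
  set q : ℝ → ℝ := derivWithin p (Icc 0 h) with hqdef
  have hpc : ContinuousOn p (Icc 0 h) := hp.continuousOn
  have hpd : ∀ z ∈ Icc (0:ℝ) h, HasDerivWithinAt p (q z) (Icc 0 h) z :=
    fun z hz => ((hp.differentiableOn (by norm_num)) z hz).hasDerivWithinAt
  have hqC1 : ContDiffOn ℝ 1 q (Icc 0 h) := hp.derivWithin (m := 1) hI (by norm_num)
  have hqc : ContinuousOn q (Icc 0 h) := hqC1.continuousOn
  set g : ℝ → ℝ := fun y => k y * q y with hgdef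
  have hgC1 : ContDiffOn ℝ 1 g (Icc 0 h) := (hk.of_le (by norm_num)).mul hqC1
  have hgc : ContinuousOn g (Icc 0 h) := hgC1.continuousOn
  set g' : ℝ → ℝ := derivWithin g (Icc 0 h) with hg'def
  have hgd : ∀ z ∈ Icc (0:ℝ) h, HasDerivWithinAt g (g' z) (Icc 0 h) z :=
    fun z hz => ((hgC1.differentiableOn (by norm_num)) z hz).hasDerivWithinAt
  have hg'c : ContinuousOn g' (Icc 0 h) := hgC1.continuousOn_derivWithin hI le_rfl
  have hODE' : ∀ z ∈ Icc (0:ℝ) h, g' z = -(w z * q z + lam * p z) := by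
    intro z hz
    have := hODE z hz
    linarith
  have hq_eq : ∀ z ∈ Icc (0:ℝ) h, q z = g z / k z := by
    intro z hz
    rw [hgdef]
    exact (mul_div_cancel_left₀ (q z) (hkne z hz)).symm
  have hg0 : g 0 = 0 := by simp [hgdef, hq0]
  have hgh : g h = 0 := by simp [hgdef, hqh]
  have h0mem : (0:ℝ) ∈ Icc (0:ℝ) h := ⟨le_rfl, hh.le⟩
  have hhmem : h ∈ Icc (0:ℝ) h := ⟨hh.le, le_rfl⟩
  have huIcc : uIcc (0:ℝ) h = Icc 0 h := uIcc_of_le hh.le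
  -- interval integrability of the main integrand
  have hintg : IntervalIntegrable (fun z => p z ^ 2 * mu z) MeasureTheory.volume 0 h :=
    (((hpc.pow 2).mul hmuc).mono huIcc.subset).intervalIntegrable
  have goal_eq : (∫ z in (0:ℝ)..h, (p z) ^ 2 * Real.exp (∫ ζ in (0:ℝ)..z, w ζ / k ζ))
      = ∫ z in (0:ℝ)..h, p z ^ 2 * mu z := rfl
  rw [goal_eq]
  rcases eq_or_lt_of_le hlam with hlam0 | hlampos
  · -- case lam = 0 : p ≡ 1
    have hgzero : ∀ z ∈ Icc (0:ℝ) h, g z = 0 := by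
      have hbd : ∀ z ∈ Icc (0:ℝ) h, |g' z| ≤ (W / κ) * |g z| := by
        intro z hz
        have e1 : |g' z| = |w z| * (|g z| / k z) := by
          rw [hODE' z hz, ← hlam0, hq_eq z hz]
          rw [zero_mul, add_zero, abs_neg, abs_mul, abs_div, abs_of_pos (hkpos z hz)]
        calc |g' z| = |w z| * (|g z| / k z) := e1
          _ ≤ W * (|g z| / κ) := mul_le_mul (hW_ge z hz)
              (div_le_div_of_nonneg_left (abs_nonneg _) hκ (hκ_le z hz))
              (div_nonneg (abs_nonneg _) (hkpos z hz).le) hW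
          _ = (W / κ) * |g z| := by ring
      intro z hz
      have := SLB.gronwall_fwd hgc hgd hbd z hz
      rw [hg0] at this
      simpa using abs_nonpos_iff.mp (by simpa using this)
    have hpone : ∀ z ∈ Icc (0:ℝ) h, p z = 1 := by
      intro z hz
      have hsub : Icc (0:ℝ) z ⊆ Icc 0 h := Icc_subset_Icc le_rfl hz.2
      have hFTC : ∫ x in (0:ℝ)..z, q x = p z - p 0 :=
        SLB.ftc_integral hz.1 (hpc.mono hsub)
          (fun x hx => (hpd x (hsub hx)).mono hsub) (hqc.mono hsub)
      have heq0 : EqOn q (fun _ => (0:ℝ)) (uIcc (0:ℝ) z) := by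
        intro x hx
        rw [uIcc_of_le hz.1] at hx
        have hx' := hsub hx
        have h1 : k x * q x = 0 := hgzero x hx'
        rcases mul_eq_zero.mp h1 with h' | h'
        · exact absurd h' (hkne x hx')
        · exact h'
      have hzero : ∫ x in (0:ℝ)..z, q x = 0 := by
        rw [intervalIntegral.integral_congr heq0]
        simp
      rw [hzero, hp0] at hFTC
      linarith
    have heq : ∀ z ∈ uIcc (0:ℝ) h, p z ^ 2 * mu z = mu z := by
      intro z hz
      rw [huIcc] at hz
      rw [hpone z hz]
      ring
    rw [intervalIntegral.integral_congr heq]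
    constructor
    · calc C⁻¹ ≤ m * h / (2 * X) := hCinv
        _ ≤ m * h := div_le_self (by positivity) (by linarith)
        _ = ∫ z in (0:ℝ)..h, m := by
            rw [intervalIntegral.integral_const, smul_eq_mul]; ring
        _ ≤ ∫ z in (0:ℝ)..h, mu z := by
            exact intervalIntegral.integral_mono_on hh.le intervalIntegrable_const
              ((hmuc.mono huIcc.subset).intervalIntegrable) hm_le
    · calc (∫ z in (0:ℝ)..h, mu z) ≤ ∫ z in (0:ℝ)..h, M := by
            exact intervalIntegral.integral_mono_on hh.le
              ((hmuc.mono huIcc.subset).intervalIntegrable) intervalIntegrable_const hM_ge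
        _ = M * h := by rw [intervalIntegral.integral_const, smul_eq_mul]; ring
        _ ≤ M * h * X := le_mul_of_one_le_right (by positivity) hX1
        _ ≤ C := le_max_left _ _
  · -- case lam > 0
    have hlamne : lam ≠ 0 := hlampos.ne'
    set E : ℝ → ℝ := fun z => p z ^ 2 + g z ^ 2 / (k z * lam) with hEdef
    set e : ℝ → ℝ := fun z => -((k' z + 2 * w z) * (g z ^ 2 / (k z ^ 2 * lam))) with hedef
    have hEd : ∀ z ∈ Icc (0:ℝ) h, HasDerivWithinAt E (e z) (Icc 0 h) z := by
      intro z hz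
      have hkz := hkne z hz
      have h1 : HasDerivWithinAt (fun y => p y ^ 2) (2 * p z ^ 1 * q z) (Icc 0 h) z :=
        (hpd z hz).pow 2
      have h2 : HasDerivWithinAt (fun y => g y ^ 2) (2 * g z ^ 1 * g' z) (Icc 0 h) z :=
        (hgd z hz).pow 2
      have h3 : HasDerivWithinAt (fun y => k y * lam) (k' z * lam) (Icc 0 h) z :=
        (hkd z hz).mul_const lam
      have hden : k z * lam ≠ 0 := mul_ne_zero hkz hlamne
      have h4 := h2.div h3 hden
      have h5 := h1.add h4
      refine h5.congr_deriv ?_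
      simp only [hedef]
      rw [hODE' z hz, hq_eq z hz]
      field_simp
      ring
    have hEc : ContinuousOn E (Icc 0 h) := by
      apply (hpc.pow 2).add
      exact (hgc.pow 2).div (hkc.mul continuousOn_const)
        (fun z hz => mul_ne_zero (hkne z hz) hlamne)
    have hE0 : E 0 = 1 := by
      simp only [hEdef]
      simp [hg0, hp0]
    have hEnn : ∀ z ∈ Icc (0:ℝ) h, 0 ≤ E z := by
      intro z hz
      simp only [hEdef]
      exact add_nonneg (sq_nonneg _)
        (div_nonneg (sq_nonneg _) (mul_nonneg (hkpos z hz).le hlampos.le))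
    have hbd : ∀ z ∈ Icc (0:ℝ) h, |e z| ≤ K * |E z| := by
      intro z hz
      have hkz := hkpos z hz
      have hnn1 : (0:ℝ) ≤ g z ^ 2 / (k z ^ 2 * lam) :=
        div_nonneg (sq_nonneg _) (mul_nonneg (sq_nonneg _) hlampos.le)
      have hnn2 : (0:ℝ) ≤ g z ^ 2 / (k z * lam) :=
        div_nonneg (sq_nonneg _) (mul_nonneg hkz.le hlampos.le)
      have h1 : |e z| ≤ B * (g z ^ 2 / (k z ^ 2 * lam)) := by
        simp only [hedef]
        rw [abs_neg, abs_mul, abs_of_nonneg hnn1]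
        exact mul_le_mul_of_nonneg_right (hB_ge z hz) hnn1
      have h2 : B * (g z ^ 2 / (k z ^ 2 * lam)) = (g z ^ 2 / (k z * lam)) * (B / k z) := by
        field_simp
      have h3 : (g z ^ 2 / (k z * lam)) * (B / k z) ≤ (g z ^ 2 / (k z * lam)) * (B / κ) :=
        mul_le_mul_of_nonneg_left (div_le_div_of_nonneg_left hB hκ (hκ_le z hz)) hnn2
      have h4 : g z ^ 2 / (k z * lam) ≤ E z := by
        simp only [hEdef]
        nlinarith [sq_nonneg (p z)]
      have h5 : (g z ^ 2 / (k z * lam)) * (B / κ) ≤ E z * K := by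
        rw [hKdef]
        exact mul_le_mul_of_nonneg_right h4 (div_nonneg hB hκ.le)
      rw [abs_of_nonneg (hEnn z hz)]
      calc |e z| ≤ B * (g z ^ 2 / (k z ^ 2 * lam)) := h1
        _ = (g z ^ 2 / (k z * lam)) * (B / k z) := h2
        _ ≤ (g z ^ 2 / (k z * lam)) * (B / κ) := h3
        _ ≤ E z * K := h5
        _ = K * E z := by ring
    have hEub : ∀ z ∈ Icc (0:ℝ) h, E z ≤ X := by
      intro z hz
      have hgw := SLB.gronwall_fwd hEc hEd hbd z hz
      rw [hE0] at hgw
      have h1 : |E z| ≤ Real.exp (K * (z - 0)) := by simpa using hgw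
      rw [abs_of_nonneg (hEnn z hz)] at h1
      refine h1.trans ?_
      rw [hXdef]
      apply Real.exp_le_exp.mpr
      nlinarith [hz.2, hK]
    have hElb : ∀ z ∈ Icc (0:ℝ) h, (1:ℝ) ≤ E z * X := by
      intro z hz
      have hgw := SLB.gronwall_bwd hEc hEd hbd z hz
      rw [hE0] at hgw
      have h1 : (1:ℝ) ≤ |E z| * Real.exp (K * (z - 0)) := by simpa using hgw
      rw [abs_of_nonneg (hEnn z hz)] at h1
      refine h1.trans ?_
      apply mul_le_mul_of_nonneg_left _ (hEnn z hz)
      rw [hXdef]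
      apply Real.exp_le_exp.mpr
      nlinarith [hz.2, hK]
    -- energy identity
    set G : ℝ → ℝ := fun z => g z * mu z * p z with hGdef
    set e2 : ℝ → ℝ := fun z => mu z * g z ^ 2 / k z - lam * (p z ^ 2 * mu z) with he2def
    have hGd : ∀ z ∈ Icc (0:ℝ) h, HasDerivWithinAt G (e2 z) (Icc 0 h) z := by
      intro z hz
      have hkz := hkne z hz
      have h1 := ((hgd z hz).mul (hmud z hz)).mul (hpd z hz)
      refine h1.congr_deriv ?_
      simp only [he2def, Pi.mul_apply]
      rw [hODE' z hz, hq_eq z hz]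
      field_simp
      ring
    have hGc : ContinuousOn G (Icc 0 h) := (hgc.mul hmuc).mul hpc
    have he2c : ContinuousOn e2 (Icc 0 h) := by
      apply ContinuousOn.sub
      · exact ((hmuc.mul (hgc.pow 2)).div hkc hkne)
      · exact continuousOn_const.mul ((hpc.pow 2).mul hmuc)
    have hintA : IntervalIntegrable (fun z => mu z * g z ^ 2 / k z) MeasureTheory.volume 0 h :=
      (((hmuc.mul (hgc.pow 2)).div hkc hkne).mono huIcc.subset).intervalIntegrable
    have hident : ∫ z in (0:ℝ)..h, e2 z = 0 := by
      rw [SLB.ftc_integral hh.le hGc hGd he2c]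
      simp only [hGdef]
      simp [hg0, hgh]
    have hsplit : (∫ z in (0:ℝ)..h, e2 z)
        = (∫ z in (0:ℝ)..h, mu z * g z ^ 2 / k z)
          - lam * ∫ z in (0:ℝ)..h, p z ^ 2 * mu z := by
      simp only [he2def]
      rw [intervalIntegral.integral_sub hintA (hintg.const_mul lam)]
      rw [intervalIntegral.integral_const_mul]
    have hA : (∫ z in (0:ℝ)..h, mu z * g z ^ 2 / k z)
        = lam * ∫ z in (0:ℝ)..h, p z ^ 2 * mu z := by
      rw [hsplit] at hident
      linarith
    set I : ℝ := ∫ z in (0:ℝ)..h, p z ^ 2 * mu z with hIdef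
    constructor
    · -- lower bound
      have hptwise : ∀ z ∈ Icc (0:ℝ) h, m * X⁻¹ ≤ mu z * E z := by
        intro z hz
        have h1 : (1:ℝ) ≤ E z * X := hElb z hz
        have h2 : X⁻¹ ≤ E z := by
          rw [inv_le_iff_one_le_mul₀ hX]
          linarith [mul_comm (E z) X]
        exact mul_le_mul (hm_le z hz) h2 (by positivity) (hmupos z).le
      have hmuE : ∀ z ∈ uIcc (0:ℝ) h, mu z * E z
          = p z ^ 2 * mu z + (mu z * g z ^ 2 / k z) / lam := by
        intro z hz
        rw [huIcc] at hz
        have hkz := hkne z hz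
        simp only [hEdef]
        field_simp
      have hintmuE : IntervalIntegrable (fun z => mu z * E z) MeasureTheory.volume 0 h :=
        ((hmuc.mul hEc).mono huIcc.subset).intervalIntegrable
      have hcalc : (∫ z in (0:ℝ)..h, mu z * E z) = 2 * I := by
        rw [intervalIntegral.integral_congr hmuE]
        rw [intervalIntegral.integral_add hintg (hintA.div_const lam)]
        rw [intervalIntegral.integral_div, hA]
        rw [hIdef]
        field_simp
        ring
      have hlow : h * (m * X⁻¹) ≤ 2 * I := by
        rw [← hcalc]
        calc h * (m * X⁻¹) = ∫ z in (0:ℝ)..h, m * X⁻¹ := by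
              rw [intervalIntegral.integral_const, smul_eq_mul]; ring
          _ ≤ ∫ z in (0:ℝ)..h, mu z * E z := by
              exact intervalIntegral.integral_mono_on hh.le intervalIntegrable_const
                hintmuE hptwise
      have h2X : m * h / (2 * X) = (h * (m * X⁻¹)) / 2 := by
        field_simp
      calc C⁻¹ ≤ m * h / (2 * X) := hCinv
        _ = (h * (m * X⁻¹)) / 2 := h2X
        _ ≤ I := by linarith
    · -- upper bound
      have hptwise : ∀ z ∈ Icc (0:ℝ) h, p z ^ 2 * mu z ≤ X * M := by
        intro z hz
        have h1 : p z ^ 2 ≤ E z := by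
          simp only [hEdef]
          have h2 : (0:ℝ) ≤ g z ^ 2 / (k z * lam) :=
            div_nonneg (sq_nonneg _) (mul_nonneg (hkpos z hz).le hlampos.le)
          linarith
        have h2 : p z ^ 2 ≤ X := h1.trans (hEub z hz)
        exact mul_le_mul h2 (hM_ge z hz) (hmupos z).le hX.le
      calc I ≤ ∫ z in (0:ℝ)..h, X * M := by
            exact intervalIntegral.integral_mono_on hh.le hintg
              intervalIntegrable_const hptwise
        _ = h * (X * M) := by rw [intervalIntegral.integral_const, smul_eq_mul]; ring
        _ = M * h * X := by ring
        _ ≤ C := le_max_left _ _
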